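/- Given α : S → Q_t and β : Q_t → P, the wrapper ([α, [i_t, δ_t] ∘ F_I α], β) with state-selector [α, [i_t, δ_t] ∘ F_I α] : S + F_I S → Q_t is locally closed with respect to α. -/

import Mathlib

open CategoryTheory Limits

/-- The functor `F_I = I + F(-)`. -/
noncomputable def FIfun {C : Type*} [Category C] [HasBinaryCoproducts C]
    (F : C ⥤ C) (I : C) : C ⥤ C where
  obj X := I ⨿ F.obj X
  map f := coprod.map (𝟙 I) (F.map f)

/-- The wrapper `([α, [i_t, δ_t] ∘ F_I α], β)` is locally closed with respect to `α`:
the subobject `α^◁` is below the `M`-part of the new selector, and there are morphisms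
`i_W : I → H_W` and `lclose : FS → H_W` satisfying the local-closedness equations. -/
theorem stmt7 {C : Type*} [Category C] [HasBinaryCoproducts C]
    (E M : MorphismProperty C)
    (hE : ∀ {X Y : C} (f : X ⟶ Y), E f → Epi f)
    (hM : ∀ {X Y : C} (f : X ⟶ Y), M f → Mono f)
    (fill : ∀ {X Y Z W : C} (e : X ⟶ Y) (m : Z ⟶ W) (f : X ⟶ Z) (g : Y ⟶ W),
      E e → M m → f ≫ m = e ≫ g → ∃! d : Y ⟶ Z, e ≫ d = f ∧ d ≫ m = g)
    (F : C ⥤ C) (I O : C)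
    (Qt : C) (δt : F.obj Qt ⟶ Qt) (it : I ⟶ Qt) (ot : Qt ⟶ O)
    (S : C) (α : S ⟶ Qt) (P : C) (β : Qt ⟶ P)
    -- the new state selector `α' = [α, [i_t, δ_t] ∘ F_I α] : S + F_I S ⟶ Q_t`
    (α' : S ⨿ (FIfun F I).obj S ⟶ Qt)
    (hα' : α' = coprod.desc α ((FIfun F I).map α ≫ coprod.desc it δt))
    -- factorisation of α
    (Xα : C) (eα : S ⟶ Xα) (mα : Xα ⟶ Qt)
    (heα : E eα) (hmα : M mα) (hfα : eα ≫ mα = α)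
    -- factorisation of α'
    (Xα' : C) (eα' : S ⨿ (FIfun F I).obj S ⟶ Xα') (mα' : Xα' ⟶ Qt)
    (heα' : E eα') (hmα' : M mα') (hfα' : eα' ≫ mα' = α')
    -- factorisation of τ_W = α' ≫ β through the hypothesis state space H
    (H : C) (e : S ⨿ (FIfun F I).obj S ⟶ H) (m : H ⟶ P)
    (he : E e) (hm : M m) (hem : e ≫ m = α' ≫ β) :
    (∃ g : Xα ⟶ Xα', g ≫ mα' = mα) ∧
    (∃ iW : I ⟶ H, iW ≫ m = it ≫ β) ∧
    (∃ lclose : F.obj S ⟶ H, lclose ≫ m = F.map α ≫ δt ≫ β) := by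
  refine ⟨?_, ?_, ?_⟩
  · have hcomm : (coprod.inl ≫ eα') ≫ mα' = eα ≫ mα := by
      have h1 : coprod.inl ≫ α' = α := by rw [hα', coprod.inl_desc]
      rw [Category.assoc, hfα', h1, hfα]
    obtain ⟨d, ⟨_, hd2⟩, _⟩ := fill eα mα' (coprod.inl ≫ eα') mα heα hmα' hcomm
    exact ⟨d, hd2⟩
  · refine ⟨(coprod.inl : I ⟶ I ⨿ F.obj S) ≫ (coprod.inr : (FIfun F I).obj S ⟶ S ⨿ (FIfun F I).obj S) ≫ e, ?_⟩
    have h : (coprod.inr : (FIfun F I).obj S ⟶ S ⨿ (FIfun F I).obj S) ≫ e ≫ m =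
        coprod.map (𝟙 I) (F.map α) ≫ coprod.desc it δt ≫ β := by
      rw [hem, hα', coprod.inr_desc_assoc]; exact Category.assoc _ _ _
    refine (Category.assoc _ _ _).trans ((congrArg (fun k : I ⨿ F.obj S ⟶ P => (coprod.inl : I ⟶ I ⨿ F.obj S) ≫ k) ((Category.assoc _ _ _).trans h)).trans ?_)
    change coprod.inl ≫ coprod.map (𝟙 I) (F.map α) ≫ coprod.desc it δt ≫ β = it ≫ β
    rw [coprod.inl_map_assoc, Category.id_comp, coprod.inl_desc_assoc]
  · refine ⟨(coprod.inr : F.obj S ⟶ I ⨿ F.obj S) ≫ (coprod.inr : (FIfun F I).obj S ⟶ S ⨿ (FIfun F I).obj S) ≫ e, ?_⟩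
    have h : (coprod.inr : (FIfun F I).obj S ⟶ S ⨿ (FIfun F I).obj S) ≫ e ≫ m =
        coprod.map (𝟙 I) (F.map α) ≫ coprod.desc it δt ≫ β := by
      rw [hem, hα', coprod.inr_desc_assoc]; exact Category.assoc _ _ _
    refine (Category.assoc _ _ _).trans ((congrArg (fun k : I ⨿ F.obj S ⟶ P => (coprod.inr : F.obj S ⟶ I ⨿ F.obj S) ≫ k) ((Category.assoc _ _ _).trans h)).trans ?_)
    change coprod.inr ≫ coprod.map (𝟙 I) (F.map α) ≫ coprod.desc it δt ≫ β = F.map α ≫ δt ≫ β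
    rw [coprod.inr_map_assoc, coprod.inr_desc_assoc]
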